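/- Let f, g : Finset (Fin n) → ℝ be nonnegative, monotone, submodular, with g having positive marginals, and let c_g be the curvature of g with c_g < 1. Let S_0 = ∅ ⊂ S_1 ⊂ ... ⊂ S_n be the greedy chain where S_k = S_{k-1} ∪ {i_k} and i_k maximizes the marginal ratio (f(S_{k-1}∪{i}) - f(S_{k-1}))/(g(S_{k-1}∪{i}) - g(S_{k-1})). Then for any S* and any k with f(S*) - f(S_{k-1}) > 0: (1 - c_g)·(g(S_k) - g(S_{k-1}))/(g(S*) - g(∅)) ≤ (f(S_k) - f(S_{k-1}))/(f(S*) - f(S_{k-1})), provided g(S*) > g(∅). -/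

import Mathlib

/-- The greedy chain of the Ψ-Greedy algorithm: start from ∅ and at each step add the
element maximizing the ratio of marginal gains of `f` over `g`. -/
def GreedyChain (n : ℕ) (f g : Finset (Fin n) → ℝ) (S : ℕ → Finset (Fin n)) : Prop :=
  S 0 = ∅ ∧ ∀ k < n, ∃ i ∉ S k,
    S (k + 1) = insert i (S k) ∧
    ∀ j ∉ S k,
      (f (insert j (S k)) - f (S k)) / (g (insert j (S k)) - g (S k)) ≤
        (f (insert i (S k)) - f (S k)) / (g (insert i (S k)) - g (S k))


lemma marg_antitone {n : ℕ} (f : Finset (Fin n) → ℝ)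
    (hsub : ∀ S T : Finset (Fin n), f (S ∪ T) + f (S ∩ T) ≤ f S + f T)
    {A B : Finset (Fin n)} {j : Fin n} (hAB : A ⊆ B) (hj : j ∉ B) :
    f (insert j B) - f B ≤ f (insert j A) - f A := by
  have h := hsub (insert j A) B
  have h1 : insert j A ∪ B = insert j B := by
    ext x; simp only [Finset.mem_union, Finset.mem_insert]
    have := @hAB x; tauto
  have h2 : insert j A ∩ B = A := by
    ext x; simp only [Finset.mem_inter, Finset.mem_insert]
    constructor
    · rintro ⟨h | h, hx⟩
      · subst h; exact absurd hx hj
      · exact h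
    · intro h; exact ⟨Or.inr h, hAB h⟩
  rw [h1, h2] at h; linarith

lemma submod_telescope {n : ℕ} (f : Finset (Fin n) → ℝ)
    (hsub : ∀ S T : Finset (Fin n), f (S ∪ T) + f (S ∩ T) ≤ f S + f T)
    (A : Finset (Fin n)) (T : Finset (Fin n)) :
    f (A ∪ T) - f A ≤ ∑ j ∈ T, (f (insert j A) - f A) := by
  induction T using Finset.induction_on with
  | empty => simp
  | @insert j T' hj ih =>
    rw [Finset.sum_insert hj]
    have hu : A ∪ insert j T' = insert j (A ∪ T') := by
      ext x; simp only [Finset.mem_union, Finset.mem_insert]; tauto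
    rw [hu]
    by_cases hjA : j ∈ A ∪ T'
    · have hjA' : j ∈ A := by
        rcases Finset.mem_union.mp hjA with h | h
        · exact h
        · exact absurd h hj
      rw [Finset.insert_eq_self.2 hjA, Finset.insert_eq_self.2 hjA']
      linarith
    · have h := marg_antitone f hsub (Finset.subset_union_left (s₂ := T')) hjA
      linarith

lemma erase_telescope {n : ℕ} (g : Finset (Fin n) → ℝ)
    (hsub : ∀ S T : Finset (Fin n), g (S ∪ T) + g (S ∩ T) ≤ g S + g T)
    (T : Finset (Fin n)) :
    ∑ j ∈ T, (g Finset.univ - g (Finset.univ.erase j)) ≤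
      g Finset.univ - g (Finset.univ \ T) := by
  induction T using Finset.induction_on with
  | empty => simp
  | @insert j T' hj ih =>
    rw [Finset.sum_insert hj]
    have h := hsub (Finset.univ.erase j) (Finset.univ \ T')
    have h1 : Finset.univ.erase j ∪ (Finset.univ \ T') = (Finset.univ : Finset (Fin n)) := by
      ext x; simp only [Finset.mem_union, Finset.mem_erase, Finset.mem_sdiff, Finset.mem_univ,
        true_and, and_true, iff_true]
      by_cases hx : x = j
      · subst hx; exact Or.inr hj
      · exact Or.inl hx
    have h2 : Finset.univ.erase j ∩ (Finset.univ \ T') = Finset.univ \ insert j T' := by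
      ext x; simp only [Finset.mem_inter, Finset.mem_erase, Finset.mem_sdiff, Finset.mem_univ,
        true_and, and_true, Finset.mem_insert]
      tauto
    rw [h1, h2] at h
    linarith

theorem stmt_12 (n : ℕ) (hn : 0 < n) (f g : Finset (Fin n) → ℝ)
    (hfnn : ∀ S : Finset (Fin n), 0 ≤ f S) (hgnn : ∀ S : Finset (Fin n), 0 ≤ g S)
    (hfsub : ∀ S T : Finset (Fin n), f (S ∪ T) + f (S ∩ T) ≤ f S + f T)
    (hgsub : ∀ S T : Finset (Fin n), g (S ∪ T) + g (S ∩ T) ≤ g S + g T)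
    (hfmono : ∀ A B : Finset (Fin n), A ⊆ B → f A ≤ f B)
    (hgmono : ∀ A B : Finset (Fin n), A ⊆ B → g A ≤ g B)
    (hgmarg : ∀ (A : Finset (Fin n)) (i : Fin n), i ∉ A → 0 < g (insert i A) - g A)
    (cg : ℝ)
    (hcg : cg = 1 - Finset.univ.inf'
      (Finset.univ_nonempty_iff.mpr (Fin.pos_iff_nonempty.mp hn))
      (fun i : Fin n => (g Finset.univ - g (Finset.univ.erase i)) / (g {i} - g ∅)))
    (hcg1 : cg < 1)
    (S : ℕ → Finset (Fin n)) (hchain : GreedyChain n f g S)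
    (Sstar : Finset (Fin n)) (k : ℕ) (hk : k < n)
    (hfpos : 0 < f Sstar - f (S k)) (hgpos : g ∅ < g Sstar) :
    (1 - cg) * (g (S (k + 1)) - g (S k)) / (g Sstar - g ∅) ≤
      (f (S (k + 1)) - f (S k)) / (f Sstar - f (S k)) := by
  obtain ⟨h0, hstep⟩ := hchain
  obtain ⟨i, hiA, hSk1, hmax⟩ := hstep k hk
  set A := S k with hA
  have h1cg : 0 < 1 - cg := by linarith
  have hΔg : 0 < g (insert i A) - g A := hgmarg A i hiA
  have hΔf : 0 ≤ f (insert i A) - f A :=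
    sub_nonneg.2 (hfmono _ _ (Finset.subset_insert _ _))
  set r := (f (insert i A) - f A) / (g (insert i A) - g A) with hr
  have hrnn : 0 ≤ r := div_nonneg hΔf hΔg.le
  -- per-element bound
  have key : ∀ j : Fin n,
      (1 - cg) * (f (insert j A) - f A) ≤ r * (g Finset.univ - g (Finset.univ.erase j)) := by
    intro j
    have hUe : 0 ≤ g Finset.univ - g (Finset.univ.erase j) :=
      sub_nonneg.2 (hgmono _ _ (Finset.subset_univ _))
    by_cases hjA : j ∈ A
    · have : insert j A = A := Finset.insert_eq_self.2 hjA
      rw [this]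
      simp only [sub_self, mul_zero]
      positivity
    · -- greedy: f marg ≤ r * g marg
      have hgj : 0 < g (insert j A) - g A := hgmarg A j hjA
      have hstep1 : f (insert j A) - f A ≤ r * (g (insert j A) - g A) := by
        have := hmax j hjA
        rw [div_le_iff₀ hgj] at this
        calc f (insert j A) - f A
            = (f (insert j A) - f A) / (g (insert j A) - g A) * (g (insert j A) - g A) := by
              field_simp
          _ ≤ r * (g (insert j A) - g A) := by
              exact mul_le_mul_of_nonneg_right (hmax j hjA) hgj.le
      -- submodularity: g marg ≤ g {j} - g ∅
      have hstep2 : g (insert j A) - g A ≤ g {j} - g ∅ := by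
        have h := hgsub {j} A
        have h1 : {j} ∪ A = insert j A := by rw [Finset.insert_eq]
        have h2 : {j} ∩ A = (∅ : Finset (Fin n)) := by
          ext x; simp only [Finset.mem_inter, Finset.mem_singleton, Finset.notMem_empty,
            iff_false, not_and]
          rintro rfl; exact hjA
        rw [h1, h2] at h; linarith
      -- curvature: (1-cg)(g{j}-g∅) ≤ g univ - g (erase)
      have hgj0 : 0 < g {j} - g ∅ := by
        have := hgmarg ∅ j (Finset.notMem_empty j)
        simpa using this
      have hcurv : (1 - cg) * (g {j} - g ∅) ≤ g Finset.univ - g (Finset.univ.erase j) := by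
        have hle : (1 - cg) ≤ (g Finset.univ - g (Finset.univ.erase j)) / (g {j} - g ∅) := by
          have hm : Finset.univ.inf' (Finset.univ_nonempty_iff.mpr (Fin.pos_iff_nonempty.mp hn))
              (fun i : Fin n => (g Finset.univ - g (Finset.univ.erase i)) / (g {i} - g ∅)) ≤
              (g Finset.univ - g (Finset.univ.erase j)) / (g {j} - g ∅) :=
            Finset.inf'_le _ (Finset.mem_univ j)
          rw [hcg]; linarith [hm]
        calc (1 - cg) * (g {j} - g ∅)
            ≤ (g Finset.univ - g (Finset.univ.erase j)) / (g {j} - g ∅) * (g {j} - g ∅) :=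
              mul_le_mul_of_nonneg_right hle hgj0.le
          _ = g Finset.univ - g (Finset.univ.erase j) := by field_simp
      nlinarith [mul_le_mul_of_nonneg_left hstep1 h1cg.le,
        mul_le_mul_of_nonneg_left hstep2 (mul_nonneg h1cg.le hrnn),
        mul_le_mul_of_nonneg_left hcurv hrnn]
  -- sum over Sstar
  have hsum : (1 - cg) * (f (A ∪ Sstar) - f A) ≤ r * (g Sstar - g ∅) := by
    have t1 : f (A ∪ Sstar) - f A ≤ ∑ j ∈ Sstar, (f (insert j A) - f A) :=
      submod_telescope f hfsub A Sstar
    have t2 : ∑ j ∈ Sstar, (1 - cg) * (f (insert j A) - f A) ≤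
        ∑ j ∈ Sstar, r * (g Finset.univ - g (Finset.univ.erase j)) :=
      Finset.sum_le_sum fun j _ => key j
    rw [← Finset.mul_sum, ← Finset.mul_sum] at t2
    have t3 : ∑ j ∈ Sstar, (g Finset.univ - g (Finset.univ.erase j)) ≤
        g Finset.univ - g (Finset.univ \ Sstar) := erase_telescope g hgsub Sstar
    have t4 : g Finset.univ - g (Finset.univ \ Sstar) ≤ g Sstar - g ∅ := by
      have h := hgsub Sstar (Finset.univ \ Sstar)
      have h1 : Sstar ∪ (Finset.univ \ Sstar) = Finset.univ := by
        ext x; simp [em]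
      have h2 : Sstar ∩ (Finset.univ \ Sstar) = (∅ : Finset (Fin n)) := by
        ext x; simp
      rw [h1, h2] at h; linarith
    have t5 : r * (g Finset.univ - g (Finset.univ \ Sstar)) ≤ r * (g Sstar - g ∅) :=
      mul_le_mul_of_nonneg_left t4 hrnn
    have t6 := mul_le_mul_of_nonneg_left t3 hrnn
    have t7 := mul_le_mul_of_nonneg_left t1 h1cg.le
    linarith
  have hmonoU : f Sstar ≤ f (A ∪ Sstar) := hfmono _ _ Finset.subset_union_right
  have hmain : (1 - cg) * (f Sstar - f A) ≤ r * (g Sstar - g ∅) := by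
    nlinarith
  -- finish
  rw [hSk1, div_le_div_iff₀ (by linarith : (0:ℝ) < g Sstar - g ∅) hfpos]
  have hrg : r * (g (insert i A) - g A) = f (insert i A) - f A := by
    rw [hr]; field_simp
  nlinarith [mul_le_mul_of_nonneg_right hmain hΔg.le]
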